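/- Let X be a real normed space, C ⊆ X a nontrivial convex cone having a bounded base, and 0 < ε < 1. Then there exist a bounded base B of C and 0 < ε' < ε such that δ_B > ε, C_{(B,ε)} ⊆ C_ε, and C_α \ {0} ⊆ int(C_{(B,ε)}) for every 0 < α < ε'. -/

import Mathlib

open Set Metric Pointwise

namespace HenigPaper

variable {X : Type*} [NormedAddCommGroup X] [NormedSpace ℝ X]

/-- `C` is a cone: closed under multiplication by nonnegative scalars. -/
def IsCone (C : Set X) : Prop :=
  ∀ ⦃l : ℝ⦄, 0 ≤ l → ∀ ⦃x⦄, x ∈ C → l • x ∈ C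

/-- `C` is a nontrivial cone: `{0} ⊊ C ⊊ X`. -/
def NontrivialCone (C : Set X) : Prop :=
  IsCone C ∧ ({(0 : X)} : Set X) ⊂ C ∧ C ≠ Set.univ

/-- A cone is pointed if `(-C) ∩ C = {0}`. -/
def PointedCone' (C : Set X) : Prop := (-C) ∩ C = ({(0 : X)} : Set X)

/-- Convexity of a cone in the sense `C + C = C`. -/
def ConeConvex (C : Set X) : Prop := C + C = C

/-- The strict separation property (SSP) for the pair of cones `(C, K)`. -/
def SSP (C K : Set X) : Prop :=
  (0 : X) ∉ closure (convexHull ℝ (C ∩ sphere (0 : X) 1) -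
    convexHull ℝ ((frontier K ∩ sphere (0 : X) 1) ∪ {(0 : X)}))

/-- The Bishop–Phelps cone `C(f, α) = {x : f x ≥ α ‖x‖}`. -/
def BPCone (f : X →L[ℝ] ℝ) (α : ℝ) : Set X := {x : X | α * ‖x‖ ≤ f x}

/-- The sublevel set `S(f, α) = {x : f x + α ‖x‖ ≤ 0}`. -/
def Ssub (f : X →L[ℝ] ℝ) (α : ℝ) : Set X := {x : X | f x + α * ‖x‖ ≤ 0}

/-- `f ∈ C^#`: strictly positive functionals on `C`. -/
def StrictlyPos (C : Set X) (f : X →L[ℝ] ℝ) : Prop :=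
  ∀ x ∈ C, x ≠ 0 → 0 < f x

/-- `(f, α) ∈ C^{a*}`: the augmented dual cone. -/
def MemAugDual (C : Set X) (f : X →L[ℝ] ℝ) (α : ℝ) : Prop :=
  StrictlyPos C f ∧ 0 ≤ α ∧ ∀ x ∈ C, α * ‖x‖ ≤ f x

/-- `(f, α) ∈ C^{a#}_+`. -/
def MemAugDualSharpPlus (C : Set X) (f : X →L[ℝ] ℝ) (α : ℝ) : Prop :=
  StrictlyPos C f ∧ 0 < α ∧ ∀ x ∈ C, x ≠ 0 → α * ‖x‖ < f x

/-- `B` is a base for the cone `C`. -/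
def IsBase (C B : Set X) : Prop :=
  B.Nonempty ∧ Convex ℝ B ∧ B ⊆ C ∧ (0 : X) ∉ closure B ∧
    ∀ x ∈ C, x ≠ (0 : X) → ∃! p : ℝ × X, 0 < p.1 ∧ p.2 ∈ B ∧ x = p.1 • p.2

/-- The cone `C` has a bounded base. -/
def HasBoundedBase (C : Set X) : Prop :=
  ∃ B : Set X, IsBase C B ∧ Bornology.IsBounded B

/-- The cone generated by a set `A`. -/
def coneGen (A : Set X) : Set X := {y : X | ∃ l : ℝ, 0 ≤ l ∧ ∃ a ∈ A, y = l • a}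

/-- The `ε`-conic neighbourhood `C_ε` of a cone `C`. -/
def epsCone (C : Set X) (ε : ℝ) : Set X :=
  coneGen {x : X | infDist x (C ∩ sphere (0 : X) 1) ≤ ε}

/-- `δ_B = inf {‖b‖ : b ∈ B}`. -/
noncomputable def deltaB (B : Set X) : ℝ := sInf ((fun b => ‖b‖) '' B)

/-- The Henig dilating cone `C_{(B,ε)}`. -/
def henigCone (B : Set X) (ε : ℝ) : Set X :=
  coneGen {x : X | infDist x B ≤ ε}

/-- The set of efficient (Pareto minimal) points of `A` with respect to the cone `C`. -/
def MinSet (A C : Set X) : Set X :=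
  {x ∈ A | (A - ({x} : Set X)) ∩ (-C) = ({(0 : X)} : Set X)}

/-- The set of Henig global proper efficient points of `A` with respect to `C`. -/
def GHe (A C : Set X) : Set X :=
  {x : X | ∃ K : Set X, IsCone K ∧ ConeConvex K ∧ C \ {(0 : X)} ⊆ interior K ∧
    x ∈ MinSet A K}

/-- A subset of `X` is weakly compact if it is compact in the weak topology. -/
def WeaklyCompact (A : Set X) : Prop :=
  IsCompact ((toWeakSpace ℝ X) '' A)

end HenigPaper

open HenigPaper

variable {X : Type*} [NormedAddCommGroup X] [NormedSpace ℝ X]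


theorem base_smul' {C B : Set X} (hC : IsCone C) (hB : IsBase C B) {t : ℝ} (ht : 0 < t) :
    IsBase C (t • B) := by
  obtain ⟨hne, hcv, hsub, hcl, huni⟩ := hB
  refine ⟨hne.smul_set, hcv.smul t, ?_, ?_, ?_⟩
  · rintro x ⟨b, hb, rfl⟩
    exact hC ht.le (hsub hb)
  · rw [closure_smul₀' ht.ne']
    rintro ⟨y, hy, hty⟩
    rw [smul_eq_zero] at hty
    rcases hty with h | h
    · exact ht.ne' h
    · exact hcl (h ▸ hy)
  · intro x hx hx0
    obtain ⟨⟨l, b⟩, ⟨hl, hb, hxe⟩, hu⟩ := huni x hx hx0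
    refine ⟨(l / t, t • b), ⟨div_pos hl ht, smul_mem_smul_set hb, ?_⟩, ?_⟩
    · rw [smul_smul, div_mul_cancel₀ _ ht.ne', hxe]
    · rintro ⟨m, y⟩ ⟨hm, hy, hxy⟩
      obtain ⟨b', hb', rfl⟩ := hy
      have h2 : ((m * t : ℝ), b') = (l, b) := by
        refine hu (m * t, b') ⟨mul_pos hm ht, hb', ?_⟩
        rw [hxy, smul_smul]
      have hmt : m * t = l := congrArg Prod.fst h2
      have hbb : b' = b := congrArg Prod.snd h2
      simp only [Prod.mk.injEq]
      exact ⟨by rw [← hmt, mul_div_cancel_right₀ _ ht.ne'], by rw [hbb]⟩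


/-- For a nontrivial convex cone `C` with a bounded base and `0 < ε < 1`, there
exist a bounded base `B` of `C` and `0 < ε' < ε` with `δ_B > ε`, `C_{(B,ε)} ⊆ C_ε`, and
`C_α \ {0} ⊆ int C_{(B,ε)}` for every `0 < α < ε'`. -/
theorem stmt8 (C : Set X) (hC : NontrivialCone C) (hconv : ConeConvex C)
    (hbb : HasBoundedBase C) (ε : ℝ) (h0 : 0 < ε) (h1 : ε < 1) :
    ∃ B : Set X, IsBase C B ∧ Bornology.IsBounded B ∧
      ∃ ε' : ℝ, 0 < ε' ∧ ε' < ε ∧ ε < deltaB B ∧ henigCone B ε ⊆ epsCone C ε ∧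
        ∀ α : ℝ, 0 < α → α < ε' →
          epsCone C α \ {(0 : X)} ⊆ interior (henigCone B ε) := by
  obtain ⟨hcone, hssub, -⟩ := hC
  obtain ⟨B₀, hB₀, hB₀bd⟩ := hbb
  -- a positive lower bound r for norms on B₀
  have hcl0 : (0 : X) ∉ closure B₀ := hB₀.2.2.2.1
  obtain ⟨r, hr, hrB⟩ : ∃ r > 0, ∀ b ∈ B₀, r ≤ ‖b‖ := by
    rw [Metric.mem_closure_iff] at hcl0
    push_neg at hcl0
    obtain ⟨r, hr, hrB⟩ := hcl0
    exact ⟨r, hr, fun b hb => by simpa [dist_eq_norm] using hrB b hb⟩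
  obtain ⟨t, ht, htr⟩ : ∃ t > (0:ℝ), t * r = 2 / ε :=
    ⟨2 / (ε * r), by positivity, by field_simp⟩
  set B : Set X := t • B₀ with hB_def
  have hBbase : IsBase C B := base_smul' hcone hB₀ ht
  have hBbd : Bornology.IsBounded B := hB₀bd.smul₀ t
  have hBne : B.Nonempty := hBbase.1
  -- every element of B has norm ≥ 2/ε
  have hnorm : ∀ b ∈ B, 2 / ε ≤ ‖b‖ := by
    rintro _ ⟨b₀, hb₀, rfl⟩
    rw [norm_smul, Real.norm_eq_abs, abs_of_pos ht]
    calc 2 / ε = t * r := htr.symm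
    _ ≤ t * ‖b₀‖ := by nlinarith [hrB b₀ hb₀]
  -- upper bound on norms of B
  obtain ⟨M, hM⟩ := hBbd.exists_norm_le
  set M' : ℝ := max M 1 with hM'_def
  have hM'1 : (1 : ℝ) ≤ M' := le_max_right _ _
  have hM'0 : (0 : ℝ) < M' := lt_of_lt_of_le one_pos hM'1
  have hMB : ∀ b ∈ B, ‖b‖ ≤ M' := fun b hb => (hM b hb).trans (le_max_left _ _)
  set ε' : ℝ := min (ε / 2) (ε / (2 * M')) with hε'_def
  have hε'0 : 0 < ε' := lt_min (by positivity) (by positivity)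
  have hε'ε : ε' < ε := lt_of_le_of_lt (min_le_left _ _) (by linarith)
  -- nonemptiness of C ∩ sphere
  obtain ⟨c₀, hc₀C, hc₀0⟩ : ∃ c₀ ∈ C, c₀ ≠ 0 := by
    obtain ⟨c₀, hc₀C, hc₀⟩ := exists_of_ssubset hssub
    exact ⟨c₀, hc₀C, by simpa using hc₀⟩
  have hCSne : (C ∩ sphere (0 : X) 1).Nonempty := by
    refine ⟨‖c₀‖⁻¹ • c₀, hcone (by positivity) hc₀C, ?_⟩
    simp [norm_smul, abs_of_pos (norm_pos_iff.mpr hc₀0),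
      inv_mul_cancel₀ (norm_ne_zero_iff.mpr hc₀0)]
  refine ⟨B, hBbase, hBbd, ε', hε'0, hε'ε, ?_, ?_, ?_⟩
  · -- ε < deltaB B
    have : 2 / ε ≤ deltaB B := by
      apply le_csInf (hBne.image _)
      rintro _ ⟨b, hb, rfl⟩
      exact hnorm b hb
    have h2ε : ε < 2 / ε := by rw [lt_div_iff₀ h0]; nlinarith
    linarith
  · -- henigCone B ε ⊆ epsCone C ε
    rintro x ⟨l, hl, y, hy, rfl⟩
    simp only [mem_setOf_eq] at hy
    have hy2 : infDist y B < 2 * ε := lt_of_le_of_lt hy (by linarith)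
    obtain ⟨b, hbB, hby⟩ := (infDist_lt_iff hBne).mp hy2
    have hb2 : 2 / ε ≤ ‖b‖ := hnorm b hbB
    have hbpos : 0 < ‖b‖ := lt_of_lt_of_le (by positivity) hb2
    have hbinv : ‖b‖⁻¹ ≤ ε / 2 := by
      rw [inv_le_comm₀ hbpos (by positivity), inv_div]
      exact hb2
    refine ⟨l * ‖b‖, by positivity, ‖b‖⁻¹ • y, ?_, ?_⟩
    · simp only [mem_setOf_eq]
      have hc : ‖b‖⁻¹ • b ∈ C ∩ sphere (0 : X) 1 := by
        refine ⟨hcone (by positivity) (hBbase.2.2.1 hbB), ?_⟩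
        simp [norm_smul, abs_of_pos (inv_pos.mpr hbpos), inv_mul_cancel₀ hbpos.ne']
      calc infDist (‖b‖⁻¹ • y) (C ∩ sphere (0 : X) 1) ≤ dist (‖b‖⁻¹ • y) (‖b‖⁻¹ • b) :=
            infDist_le_dist_of_mem hc
      _ = ‖b‖⁻¹ * dist y b := by rw [dist_smul₀, Real.norm_eq_abs, abs_of_pos (inv_pos.mpr hbpos)]
      _ ≤ (ε / 2) * (2 * ε) := by
            apply mul_le_mul hbinv hby.le dist_nonneg (by positivity)
      _ ≤ ε := by nlinarith
    · rw [smul_smul, mul_assoc, mul_inv_cancel₀ hbpos.ne', mul_one]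
  · -- third part
    rintro α hα hαε' x ⟨⟨l, hl0, z, hz, rfl⟩, hx0⟩
    simp only [mem_setOf_eq] at hz
    have hl : 0 < l := by
      rcases hl0.lt_or_eq with h | h
      · exact h
      · exfalso; apply hx0; simp [← h]
    have hz2 : infDist z (C ∩ sphere (0 : X) 1) < 2 * α := lt_of_le_of_lt hz (by linarith)
    obtain ⟨c, hc, hzc⟩ := (infDist_lt_iff hCSne).mp hz2
    have hc1 : ‖c‖ = 1 := by simpa using hc.2
    have hc0 : c ≠ 0 := by intro h; rw [h] at hc1; simp at hc1
    obtain ⟨⟨μ, b⟩, ⟨hμ, hbB, hcb⟩, -⟩ := hBbase.2.2.2.2 c hc.1 hc0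
    simp only at hμ hbB hcb
    have hbn : ‖b‖ = μ⁻¹ := by
      have : (1 : ℝ) = μ * ‖b‖ := by
        rw [← hc1, hcb, norm_smul, Real.norm_eq_abs, abs_of_pos hμ]
      field_simp
      linarith [this]
    have hbM : ‖b‖ ≤ M' := hMB b hbB
    have hμinv : μ⁻¹ ≤ M' := hbn ▸ hbM
    have h2αM : 2 * α * M' < ε := by
      have : α < ε / (2 * M') := lt_of_lt_of_le hαε' (min_le_right _ _)
      rw [lt_div_iff₀ (by positivity)] at this
      linarith
    set w : X := μ⁻¹ • z with hw_def
    have hwb : dist w b < 2 * α * M' := by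
      have hbw : b = μ⁻¹ • c := by
        rw [hcb, smul_smul, inv_mul_cancel₀ hμ.ne', one_smul]
      rw [hbw, hw_def, dist_smul₀, Real.norm_eq_abs, abs_of_pos (inv_pos.mpr hμ)]
      calc μ⁻¹ * dist z c < μ⁻¹ * (2 * α) := by
            apply mul_lt_mul_of_pos_left hzc (inv_pos.mpr hμ)
      _ ≤ M' * (2 * α) := by nlinarith
      _ = 2 * α * M' := by ring
    set ρ : ℝ := ε - 2 * α * M' with hρ_def
    have hρ : 0 < ρ := by linarith
    have hxw : l • z = (l * μ) • w := by
      rw [hw_def, smul_smul, mul_assoc, mul_inv_cancel₀ hμ.ne', mul_one]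
    rw [mem_interior]
    refine ⟨ball (l • z) (l * μ * ρ), ?_, isOpen_ball, mem_ball_self (by positivity)⟩
    intro u hu
    have hlμ : 0 < l * μ := by positivity
    refine ⟨l * μ, hlμ.le, (l * μ)⁻¹ • u, ?_, ?_⟩
    · simp only [mem_setOf_eq]
      have hvw : dist ((l * μ)⁻¹ • u) w < ρ := by
        have : w = (l * μ)⁻¹ • (l • z) := by
          rw [hxw, smul_smul, inv_mul_cancel₀ hlμ.ne', one_smul]
        rw [this, dist_smul₀, Real.norm_eq_abs, abs_of_pos (inv_pos.mpr hlμ)]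
        rw [mem_ball] at hu
        calc (l * μ)⁻¹ * dist u (l • z) < (l * μ)⁻¹ * (l * μ * ρ) :=
              mul_lt_mul_of_pos_left hu (inv_pos.mpr hlμ)
        _ = ρ := by field_simp
      calc infDist ((l * μ)⁻¹ • u) B ≤ dist ((l * μ)⁻¹ • u) b := infDist_le_dist_of_mem hbB
      _ ≤ dist ((l * μ)⁻¹ • u) w + dist w b := dist_triangle _ _ _
      _ ≤ ε := by linarith
    · rw [smul_smul, mul_inv_cancel₀ hlμ.ne', one_smul]
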